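/- In Q[x, y, z] with x < y < z and lex ordering, let G = {y², xz + y, yz, z²}. Then G is a reduced lex Gröbner basis, its W-characteristic set is C = [y², xz + y], the ideal ⟨G⟩ equals sat(C) = ⟨C⟩ : x^∞, but ⟨C⟩ ≠ sat(C). In particular, ⟨G⟩ = sat(C) does not imply sat(C) = ⟨C⟩. -/

import Mathlib

open MvPolynomial

namespace CharDec

variable {K : Type*} [Field K] {σ : Type*} [LinearOrder σ]

/-- Lexicographic comparison of exponent vectors (larger variables dominate):
`a ≤ b` iff `a = b` or at the greatest index where they differ, `a` is smaller. -/
def lexLe (a b : σ →₀ ℕ) : Prop :=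
  a = b ∨ ∃ i : σ, a i < b i ∧ ∀ j : σ, i < j → a j = b j

/-- `m` is the leading monomial of `f` with respect to the lex term ordering. -/
def IsLeadMon (f : MvPolynomial σ K) (m : σ →₀ ℕ) : Prop :=
  m ∈ f.support ∧ ∀ m' ∈ f.support, lexLe m' m

/-- `f` has leading (greatest actually occurring) variable `i`. -/
def HasLV (f : MvPolynomial σ K) (i : σ) : Prop :=
  i ∈ f.vars ∧ ∀ j ∈ f.vars, j ≤ i

/-- The coefficient of `(X i) ^ d` in `f`, as a polynomial in the remaining variables. -/
noncomputable def coeffWrt (i : σ) (d : ℕ) (f : MvPolynomial σ K) :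
    MvPolynomial σ K :=
  ∑ m ∈ f.support.filter (fun m => m i = d), monomial (m.update i 0) (f.coeff m)

/-- The initial (leading coefficient in the leading variable) of `f` with
respect to the variable `i`. -/
noncomputable def initialWrt (i : σ) (f : MvPolynomial σ K) : MvPolynomial σ K :=
  coeffWrt i (f.degreeOf i) f

/-- `R` is the pseudo-remainder of `P` on pseudo-division by `Q` with respect
to the variable `y` (classical pseudo-division, with the exponent
`deg P - deg Q + 1` when `deg P ≥ deg Q`, and `0` otherwise). -/
def IsPrem (y : σ) (Q P R : MvPolynomial σ K) : Prop :=
  ∃ A : MvPolynomial σ K,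
    (initialWrt y Q) ^ (P.degreeOf y + 1 - Q.degreeOf y) * P = A * Q + R ∧
    R.degreeOf y < Q.degreeOf y

/-- `IterPrem P L R` : `R` is the iterated pseudo-remainder of `P` by the
list `L` of pairs (leading variable, divisor), divisors being used from the
head of the list on. -/
def IterPrem : MvPolynomial σ K → List (σ × MvPolynomial σ K) →
    MvPolynomial σ K → Prop
  | P, [], R => R = P
  | P, e :: L, R => ∃ S, IsPrem e.1 e.2 P S ∧ IterPrem S L R

/-- A triangular set: a list of (leading variable, polynomial) pairs with
strictly increasing leading variables. -/
structure TriSet (K : Type*) [Field K] (σ : Type*) [LinearOrder σ] where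
  elems : List (σ × MvPolynomial σ K)
  sorted : elems.Pairwise (fun e e' => e.1 < e'.1)
  hlv : ∀ e ∈ elems, HasLV e.2 e.1

namespace TriSet

/-- The list of leading variables of a triangular set. -/
def lvs (T : TriSet K σ) : List σ := T.elems.map Prod.fst

/-- The list of polynomials of a triangular set. -/
def polys (T : TriSet K σ) : List (MvPolynomial σ K) := T.elems.map Prod.snd

/-- A variable is a parameter of `T` if it is not a leading variable of `T`. -/
def IsParam (T : TriSet K σ) (j : σ) : Prop := j ∉ T.lvs

/-- `T` is normal: every initial involves only the parameters of `T`. -/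
def Normal (T : TriSet K σ) : Prop :=
  ∀ e ∈ T.elems, ∀ j ∈ (initialWrt e.1 e.2).vars, T.IsParam j

/-- `T` is zero-dimensional: every variable is a leading variable of `T`. -/
def ZeroDim (T : TriSet K σ) : Prop := ∀ i : σ, i ∈ T.lvs

/-- The product of the initials of `T`. -/
noncomputable def prodInit (T : TriSet K σ) : MvPolynomial σ K :=
  (T.elems.map fun e => initialWrt e.1 e.2).prod

/-- The ideal generated by the polynomials of `T`. -/
noncomputable def ideal (T : TriSet K σ) : Ideal (MvPolynomial σ K) :=
  Ideal.span {p | ∃ e ∈ T.elems, p = e.2}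

end TriSet

/-- The saturation `I : J^∞` of an ideal `I` by an element `J`. -/
def satBy (I : Ideal (MvPolynomial σ K)) (J : MvPolynomial σ K) :
    Ideal (MvPolynomial σ K) where
  carrier := {p | ∃ k : ℕ, J ^ k * p ∈ I}
  zero_mem' := ⟨0, by simp⟩
  add_mem' := by
    rintro a b ⟨k, hk⟩ ⟨l, hl⟩
    refine ⟨k + l, ?_⟩
    have h : J ^ (k + l) * (a + b) = J ^ l * (J ^ k * a) + J ^ k * (J ^ l * b) := by ring
    rw [h]
    exact add_mem (Ideal.mul_mem_left _ _ hk) (Ideal.mul_mem_left _ _ hl)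
  smul_mem' := by
    rintro c a ⟨k, hk⟩
    refine ⟨k, ?_⟩
    have h : J ^ k * (c • a) = c * (J ^ k * a) := by rw [smul_eq_mul]; ring
    rw [h]
    exact Ideal.mul_mem_left _ _ hk

namespace TriSet

/-- The saturated ideal `sat(T) = ⟨T⟩ : (∏ initials)^∞` of a triangular set. -/
noncomputable def sat (T : TriSet K σ) : Ideal (MvPolynomial σ K) :=
  satBy T.ideal T.prodInit

/-- The triangular set formed by the first `i` elements of `T`. -/
def take (T : TriSet K σ) (i : ℕ) : TriSet K σ :=
  ⟨T.elems.take i, T.sorted.sublist (List.take_sublist i T.elems),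
    fun e he => T.hlv e (List.mem_of_mem_take he)⟩

/-- `T` is a regular set: each initial is neither zero nor a zero-divisor
modulo the saturated ideal of the preceding subset. -/
def Regular (T : TriSet K σ) : Prop :=
  ∀ i : ℕ, ∀ h : i < T.elems.length,
    initialWrt (T.elems.get ⟨i, h⟩).1 (T.elems.get ⟨i, h⟩).2 ∉ (T.take i).sat ∧
    ∀ p : MvPolynomial σ K,
      initialWrt (T.elems.get ⟨i, h⟩).1 (T.elems.get ⟨i, h⟩).2 * p ∈ (T.take i).sat →
        p ∈ (T.take i).sat

end TriSet

/-- The zero set, in (the algebraic closure of `K`)^σ, of a set of polynomials. -/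
def zeroSet (S : Set (MvPolynomial σ K)) : Set (σ → AlgebraicClosure K) :=
  {x | ∀ p ∈ S, aeval x p = 0}

/-- `Zero(T / ini(T))` : the common zeros of `T` at which no initial of `T` vanishes. -/
def TriSet.zeroQuasi (T : TriSet K σ) : Set (σ → AlgebraicClosure K) :=
  {x | (∀ e ∈ T.elems, aeval x e.2 = 0) ∧
       (∀ e ∈ T.elems, aeval x (initialWrt e.1 e.2) ≠ 0)}

/-- `G` is a (finite) Gröbner basis of `I` with respect to the lex term
ordering: `G ⊆ I` and the leading monomial of every nonzero element of `I` is
divisible by the leading monomial of some element of `G`. -/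
def IsGB (G : Set (MvPolynomial σ K)) (I : Ideal (MvPolynomial σ K)) : Prop :=
  G.Finite ∧ G ⊆ ↑I ∧
  ∀ f ∈ I, f ≠ 0 → ∃ g ∈ G, ∃ mf mg, IsLeadMon f mf ∧ IsLeadMon g mg ∧ ∀ j, mg j ≤ mf j

/-- `G` is the reduced lex Gröbner basis of `I`. -/
def IsReducedGB (G : Set (MvPolynomial σ K)) (I : Ideal (MvPolynomial σ K)) : Prop :=
  IsGB G I ∧ (0 : MvPolynomial σ K) ∉ G ∧
  (∀ g ∈ G, ∀ m, IsLeadMon g m → g.coeff m = 1) ∧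
  (∀ g ∈ G, ∀ g' ∈ G, g' ≠ g → ∀ m ∈ g.support, ∀ m', IsLeadMon g' m' →
    ¬ (∀ j, m' j ≤ m j))

/-- `C` is the W-characteristic set extracted from the (reduced lex Gröbner
basis) `G`: for each leading variable occurring in `G`, `C` contains the
lex-minimal element of `G` with that leading variable. -/
def IsWCharOf (C : TriSet K σ) (G : Set (MvPolynomial σ K)) : Prop :=
  (∀ e ∈ C.elems, e.2 ∈ G ∧
    ∀ g ∈ G, HasLV g e.1 → ∀ mg me, IsLeadMon g mg → IsLeadMon e.2 me → lexLe me mg) ∧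
  (∀ g ∈ G, ∀ i : σ, HasLV g i → i ∈ C.lvs)

/-- The Sylvester-style matrix of two univariate polynomials. -/
noncomputable def sylvester {R : Type*} [CommRing R] (f g : Polynomial R) :
    Matrix (Fin (f.natDegree + g.natDegree)) (Fin (f.natDegree + g.natDegree)) R :=
  Matrix.of fun i j =>
    if (i : ℕ) < g.natDegree then
      (if (i : ℕ) ≤ (j : ℕ) then f.coeff ((j : ℕ) - (i : ℕ)) else 0)
    else
      (if (i : ℕ) - g.natDegree ≤ (j : ℕ) then g.coeff ((j : ℕ) - ((i : ℕ) - g.natDegree))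
       else 0)

/-- The resultant of two univariate polynomials, as the determinant of their
Sylvester matrix. -/
noncomputable def resultantP {R : Type*} [CommRing R] (f g : Polynomial R) : R :=
  (sylvester f g).det

/-- View a multivariate polynomial as a univariate polynomial in the variable `i`. -/
noncomputable def toUni (i : σ) (f : MvPolynomial σ K) :
    Polynomial (MvPolynomial σ K) :=
  aeval (fun j => if j = i then Polynomial.X else Polynomial.C (X j)) f

/-- The resultant of two multivariate polynomials with respect to the variable `i`. -/
noncomputable def resWrt (i : σ) (f g : MvPolynomial σ K) : MvPolynomial σ K :=
  resultantP (toUni i f) (toUni i g)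

/-- The iterated resultant of `f` with respect to a list of
(leading variable, divisor) pairs, used from the head of the list on. -/
noncomputable def iterRes : MvPolynomial σ K → List (σ × MvPolynomial σ K) →
    MvPolynomial σ K
  | f, [] => f
  | f, e :: L => iterRes (resWrt e.1 f e.2) L

end CharDec

open CharDec MvPolynomial

namespace Stmt19Aux
open TrivSqZeroExt CharDec
noncomputable section

abbrev R3 : Type := MvPolynomial (Fin 3) ℚ
def my2 : Fin 3 →₀ ℕ := Finsupp.single 1 2
def mxz : Fin 3 →₀ ℕ := Finsupp.single 0 1 + Finsupp.single 2 1
def my1 : Fin 3 →₀ ℕ := Finsupp.single 1 1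
def myz : Fin 3 →₀ ℕ := Finsupp.single 1 1 + Finsupp.single 2 1
def mz2 : Fin 3 →₀ ℕ := Finsupp.single 2 2

lemma Xm (i : Fin 3) : (X i : R3) = monomial (Finsupp.single i 1) 1 := by
  rw [← pow_one (X i), X_pow_eq_monomial]

lemma hgy2 : (X 1 ^ 2 : R3) = monomial my2 1 := by rw [X_pow_eq_monomial]; rfl
lemma hgxz : (X 0 * X 2 + X 1 : R3) = monomial mxz 1 + monomial my1 1 := by
  rw [Xm, Xm, Xm, monomial_mul, one_mul]; rfl
lemma hgyz : (X 1 * X 2 : R3) = monomial myz 1 := by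
  rw [Xm, Xm, monomial_mul, one_mul]; rfl
lemma hgz2 : (X 2 ^ 2 : R3) = monomial mz2 1 := by rw [X_pow_eq_monomial]; rfl

lemma mxz_ne_my1 : mxz ≠ my1 := by
  intro h
  have := DFunLike.congr_fun h 0
  simp [mxz, my1, Finsupp.single_apply] at this


lemma coeff_gxz (m : Fin 3 →₀ ℕ) :
    (X 0 * X 2 + X 1 : R3).coeff m = (if m = mxz then 1 else 0) + (if m = my1 then 1 else 0) := by
  rw [hgxz, coeff_add, coeff_monomial, coeff_monomial]
  simp [eq_comm]

lemma sup_gxz : (X 0 * X 2 + X 1 : R3).support = {mxz, my1} := by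
  ext m
  simp only [mem_support_iff, coeff_gxz, Finset.mem_insert, Finset.mem_singleton]
  split_ifs with h1 h2 h2 <;> simp_all [mxz_ne_my1]


lemma finsupp_ext3 {a b : Fin 3 →₀ ℕ} (h0 : a 0 = b 0) (h1 : a 1 = b 1) (h2 : a 2 = b 2) : a = b :=
  Finsupp.ext fun j => by fin_cases j <;> assumption

lemma lexLe_iff (a b : Fin 3 →₀ ℕ) : lexLe a b ↔
    a = b ∨ a 2 < b 2 ∨ (a 2 = b 2 ∧ a 1 < b 1) ∨ (a 2 = b 2 ∧ a 1 = b 1 ∧ a 0 < b 0) := by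
  constructor
  · rintro (rfl | ⟨i, hi, hj⟩)
    · exact Or.inl rfl
    · fin_cases i
      · exact Or.inr (Or.inr (Or.inr ⟨hj 2 (by decide), hj 1 (by decide), hi⟩))
      · exact Or.inr (Or.inr (Or.inl ⟨hj 2 (by decide), hi⟩))
      · exact Or.inr (Or.inl hi)
  · rintro (rfl | h | ⟨h2, h1⟩ | ⟨h2, h1, h0⟩)
    · exact Or.inl rfl
    · exact Or.inr ⟨2, h, fun j hj => absurd (Fin.lt_def.mp hj) (by omega)⟩
    · refine Or.inr ⟨1, h1, fun j hj => ?_⟩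
      fin_cases j
      · exact absurd hj (by decide)
      · exact absurd hj (by decide)
      · exact h2
    · refine Or.inr ⟨0, h0, fun j hj => ?_⟩
      fin_cases j
      · exact absurd hj (by decide)
      · exact h1
      · exact h2

def key (a : Fin 3 →₀ ℕ) : Lex (ℕ × Lex (ℕ × ℕ)) := toLex (a 2, toLex (a 1, a 0))

lemma lexLe_iff_key (a b : Fin 3 →₀ ℕ) : lexLe a b ↔ key a ≤ key b := by
  rw [lexLe_iff, key, key, Prod.Lex.le_iff]
  constructor
  · rintro (rfl | h | ⟨h2, h1⟩ | ⟨h2, h1, h0⟩)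
    · exact Or.inr ⟨rfl, le_refl _⟩
    · exact Or.inl h
    · exact Or.inr ⟨h2, le_of_lt (Prod.Lex.lt_iff |>.mpr (Or.inl h1))⟩
    · exact Or.inr ⟨h2, Prod.Lex.le_iff |>.mpr (Or.inr ⟨h1, le_of_lt h0⟩)⟩
  · rintro (h | ⟨h2, h10⟩)
    · exact Or.inr (Or.inl h)
    · rcases Prod.Lex.le_iff.mp h10 with h | ⟨h1, h0⟩
      · exact Or.inr (Or.inr (Or.inl ⟨h2, h⟩))
      · rcases lt_or_eq_of_le h0 with h0 | h0
        · exact Or.inr (Or.inr (Or.inr ⟨h2, h1, h0⟩))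
        · exact Or.inl (finsupp_ext3 h0 h1 h2)

lemma exists_lead {f : MvPolynomial (Fin 3) ℚ} (hf : f ≠ 0) : ∃ m, IsLeadMon f m := by
  obtain ⟨m, hm, hmax⟩ := Finset.exists_max_image f.support key (support_nonempty.mpr hf)
  exact ⟨m, hm, fun m' hm' => (lexLe_iff_key m' m).mpr (hmax m' hm')⟩

abbrev D : Type := DualNumber (Polynomial ℚ)

def vphi : Fin 3 → D := ![inl Polynomial.X, -(inl Polynomial.X) * DualNumber.eps, DualNumber.eps]

def phi : R3 →ₐ[ℚ] D := aeval vphi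

lemma eps_pow_two : (DualNumber.eps : D) ^ 2 = 0 := by
  rw [sq, DualNumber.eps_mul_eps]

lemma eps_pow_ge_two {n : ℕ} (h : 2 ≤ n) : (DualNumber.eps : D) ^ n = 0 := by
  obtain ⟨k, rfl⟩ := Nat.exists_eq_add_of_le h
  rw [pow_add, eps_pow_two, zero_mul]

lemma algMap_eq (c : ℚ) : algebraMap ℚ D c = inl (Polynomial.C c) := by
  rw [algebraMap_eq_inl', Polynomial.algebraMap_eq]

lemma phi_monomial (m : Fin 3 →₀ ℕ) (c : ℚ) :
    phi (monomial m c) =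
      inl (Polynomial.C c * (-1) ^ (m 1) * Polynomial.X ^ (m 0 + m 1)) * DualNumber.eps ^ (m 1 + m 2) := by
  rw [phi, aeval_monomial, Finsupp.prod_fintype _ _ (fun i => pow_zero _), Fin.prod_univ_three]
  rw [algMap_eq]
  show inl (Polynomial.C c) * ((inl Polynomial.X) ^ m 0 * (-(inl Polynomial.X) * DualNumber.eps) ^ m 1 * DualNumber.eps ^ m 2) = _
  rw [inl_pow]
  have h1 : (-(inl Polynomial.X) * DualNumber.eps : D) ^ m 1
      = inl ((-Polynomial.X) ^ m 1) * DualNumber.eps ^ m 1 := by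
    rw [mul_pow, ← inl_neg, inl_pow]
  rw [h1]
  calc inl (Polynomial.C c) * (inl (Polynomial.X ^ m 0) * (inl ((-Polynomial.X) ^ m 1) * DualNumber.eps ^ m 1) * DualNumber.eps ^ m 2)
      = (inl (Polynomial.C c) * inl (Polynomial.X ^ m 0) * inl ((-Polynomial.X) ^ m 1)) * (DualNumber.eps ^ m 1 * DualNumber.eps ^ m 2) := by ring
    _ = _ := by rw [← inl_mul, ← inl_mul, ← pow_add]; congr 1; ring

lemma fst_inl_mul_eps_pow (a : Polynomial ℚ) (n : ℕ) :
    (inl a * DualNumber.eps ^ n : D).fst = if n = 0 then a else 0 := by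
  match n with
  | 0 => simp
  | 1 => rw [pow_one, DualNumber.eps, inl_mul_inr]; simp
  | (k+2) => rw [eps_pow_ge_two (by omega)]; simp

lemma snd_inl_mul_eps_pow (a : Polynomial ℚ) (n : ℕ) :
    (inl a * DualNumber.eps ^ n : D).snd = if n = 1 then a else 0 := by
  match n with
  | 0 => simp
  | 1 => rw [pow_one, DualNumber.eps, inl_mul_inr]; simp
  | (k+2) => rw [eps_pow_ge_two (by omega)]; simp

lemma snd_phi_coeff (f : R3) (k : ℕ) :
    (phi f).snd.coeff k =
      ∑ m ∈ f.support, (if m 1 + m 2 = 1 ∧ m 0 + m 1 = k then (-1) ^ (m 1) * f.coeff m else 0) := by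
  conv_lhs => rw [f.as_sum, map_sum, snd_sum, Polynomial.finset_sum_coeff]
  refine Finset.sum_congr rfl fun m _ => ?_
  rw [phi_monomial, snd_inl_mul_eps_pow]
  split_ifs with h1 h2 h2
  · rw [show (Polynomial.C (coeff m f) * (-1) ^ m 1 : Polynomial ℚ)
        = Polynomial.C ((-1) ^ m 1 * coeff m f) by
          simp [mul_comm],
      Polynomial.coeff_C_mul, Polynomial.coeff_X_pow]
    simp [h2.2]
  · rw [show (Polynomial.C (coeff m f) * (-1) ^ m 1 : Polynomial ℚ)
        = Polynomial.C ((-1) ^ m 1 * coeff m f) by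
          simp [mul_comm],
      Polynomial.coeff_C_mul, Polynomial.coeff_X_pow]
    have : ¬ k = m 0 + m 1 := fun hc => h2 ⟨h1, hc.symm⟩
    simp [this]
  · exact absurd h2.1 h1
  · simp

lemma fst_phi_coeff (f : R3) (k : ℕ) :
    (phi f).fst.coeff k =
      ∑ m ∈ f.support, (if m 1 = 0 ∧ m 2 = 0 ∧ m 0 = k then f.coeff m else 0) := by
  conv_lhs => rw [f.as_sum, map_sum, fst_sum, Polynomial.finset_sum_coeff]
  refine Finset.sum_congr rfl fun m _ => ?_
  rw [phi_monomial, fst_inl_mul_eps_pow]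
  split_ifs with h1 h2 h2
  · obtain ⟨h1', h2', h3'⟩ := h2
    simp [h1', h3', Polynomial.coeff_C_mul, Polynomial.coeff_X_pow]
  · have h10 : m 1 = 0 := by omega
    have h20 : m 2 = 0 := by omega
    have hk : ¬ k = m 0 := fun hc => h2 ⟨h10, h20, hc.symm⟩
    simp [h10, h20, Polynomial.coeff_C_mul, Polynomial.coeff_X_pow, hk]
  · exact absurd (by omega : m 1 + m 2 = 0) h1
  · simp

def Igen : Set R3 := {X 1 ^ 2, X 0 * X 2 + X 1, X 1 * X 2, X 2 ^ 2}
def I3 : Ideal R3 := Ideal.span Igen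

lemma gy2_mem : (X 1 ^ 2 : R3) ∈ I3 := Ideal.subset_span (by simp [Igen])
lemma gxz_mem : (X 0 * X 2 + X 1 : R3) ∈ I3 := Ideal.subset_span (by simp [Igen])
lemma gyz_mem : (X 1 * X 2 : R3) ∈ I3 := Ideal.subset_span (by simp [Igen])
lemma gz2_mem : (X 2 ^ 2 : R3) ∈ I3 := Ideal.subset_span (by simp [Igen])

def NF (p q : Polynomial ℚ) (c : ℚ) : R3 :=
  Polynomial.aeval (X 0) p + Polynomial.aeval (X 0) q * X 1 + C c * X 2

lemma exists_nf (f : R3) : ∃ p q c, f - NF p q c ∈ I3 := by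
  induction f using MvPolynomial.induction_on with
  | C a =>
      refine ⟨Polynomial.C a, 0, 0, ?_⟩
      simp [NF]
  | add f g hf hg =>
      obtain ⟨p1, q1, c1, h1⟩ := hf
      obtain ⟨p2, q2, c2, h2⟩ := hg
      refine ⟨p1 + p2, q1 + q2, c1 + c2, ?_⟩
      have : f + g - NF (p1 + p2) (q1 + q2) (c1 + c2)
          = (f - NF p1 q1 c1) + (g - NF p2 q2 c2) := by
        simp [NF]; ring
      rw [this]; exact add_mem h1 h2
  | mul_X f i hf =>
      obtain ⟨p, q, c, h⟩ := hf
      fin_cases i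
      · show ∃ p' q' c', f * X 0 - NF p' q' c' ∈ I3
        refine ⟨p * Polynomial.X, q * Polynomial.X - Polynomial.C c, 0, ?_⟩
        rw [show f * X 0 - NF (p * Polynomial.X) (q * Polynomial.X - Polynomial.C c) 0
          = (f - NF p q c) * X 0 + (NF p q c * X 0
            - NF (p * Polynomial.X) (q * Polynomial.X - Polynomial.C c) 0) from by ring]
        refine add_mem (I3.mul_mem_right _ h) ?_
        have : NF p q c * X 0 - NF (p * Polynomial.X) (q * Polynomial.X - Polynomial.C c) 0
            = C c * (X 0 * X 2 + X 1) := by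
          simp [NF, map_mul, map_sub, Polynomial.aeval_X, Polynomial.aeval_C]
          ring
        rw [this]; exact I3.mul_mem_left _ gxz_mem
      · show ∃ p' q' c', f * X 1 - NF p' q' c' ∈ I3
        refine ⟨0, p, 0, ?_⟩
        rw [show f * X 1 - NF 0 p 0
          = (f - NF p q c) * X 1 + (NF p q c * X 1 - NF 0 p 0) from by ring]
        refine add_mem (I3.mul_mem_right _ h) ?_
        have : NF p q c * X 1 - NF 0 p 0
            = Polynomial.aeval (X 0) q * (X 1 ^ 2) + C c * (X 1 * X 2) := by
          simp [NF]; ring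
        rw [this]
        exact add_mem (I3.mul_mem_left _ gy2_mem) (I3.mul_mem_left _ gyz_mem)
      · show ∃ p' q' c', f * X 2 - NF p' q' c' ∈ I3
        refine ⟨0, -p.divX, p.coeff 0, ?_⟩
        rw [show f * X 2 - NF 0 (-p.divX) (p.coeff 0)
          = (f - NF p q c) * X 2 + (NF p q c * X 2 - NF 0 (-p.divX) (p.coeff 0)) from by ring]
        refine add_mem (I3.mul_mem_right _ h) ?_
        have hp : (Polynomial.aeval (X 0 : R3)) p
            = Polynomial.aeval (X 0 : R3) p.divX * X 0 + C (p.coeff 0) := by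
          conv_lhs => rw [← p.divX_mul_X_add]
          simp [Polynomial.aeval_C]
        have : NF p q c * X 2 - NF 0 (-p.divX) (p.coeff 0)
            = Polynomial.aeval (X 0 : R3) p.divX * (X 0 * X 2 + X 1)
              + Polynomial.aeval (X 0 : R3) q * (X 1 * X 2) + C c * (X 2 ^ 2) := by
          simp only [NF, map_neg, map_zero, zero_add, neg_mul]
          rw [hp]; ring
        rw [this]
        exact add_mem (add_mem (I3.mul_mem_left _ gxz_mem) (I3.mul_mem_left _ gyz_mem))
          (I3.mul_mem_left _ gz2_mem)

lemma phiX0 : phi (X 0) = inl Polynomial.X := by simp [phi, vphi]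
lemma phiX1 : phi (X 1) = -(inl Polynomial.X) * DualNumber.eps := by simp [phi, vphi]
lemma phiX2 : phi (X 2) = DualNumber.eps := by simp [phi, vphi]

lemma phi_gen : ∀ g ∈ Igen, phi g = 0 := by
  have hee : (DualNumber.eps : D) * DualNumber.eps = 0 := DualNumber.eps_mul_eps
  rintro g (rfl | rfl | rfl | rfl)
  · rw [map_pow, phiX1]
    linear_combination (inl Polynomial.X * inl Polynomial.X) * hee
  · rw [map_add, map_mul, phiX0, phiX1, phiX2]
    ring
  · rw [map_mul, phiX1, phiX2]
    linear_combination (-(inl Polynomial.X)) * hee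
  · rw [map_pow, phiX2]
    linear_combination hee

lemma phi_I3 : ∀ f ∈ I3, phi f = 0 := by
  intro f hf
  refine Submodule.span_induction (p := fun x _ => phi x = 0) (fun g hg => phi_gen g hg)
    (map_zero phi)
    (fun a b _ _ ha hb => by show phi (a + b) = 0; rw [map_add, ha, hb, add_zero])
    (fun a b _ hb => by show phi (a • b) = 0; rw [smul_eq_mul, map_mul, hb, mul_zero]) hf

lemma aeval_inlX (p : Polynomial ℚ) :
    Polynomial.aeval (inl Polynomial.X : D) p = inl p := by
  induction p using Polynomial.induction_on' with
  | monomial n a =>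
      rw [Polynomial.aeval_monomial, inl_pow, ← Polynomial.C_mul_X_pow_eq_monomial]
      rw [algMap_eq, ← inl_mul]
  | add p q hp hq => rw [map_add, hp, hq, inl_add]

lemma phi_NF (p q : Polynomial ℚ) (c : ℚ) :
    phi (NF p q c) = inl p + inl (Polynomial.C c - Polynomial.X * q) * DualNumber.eps := by
  have h1 : phi (Polynomial.aeval (X 0 : R3) p) = inl p := by
    rw [← Polynomial.aeval_algHom_apply, show phi (X 0) = inl Polynomial.X from by
      simp [phi, vphi], aeval_inlX]
  have h1q : phi (Polynomial.aeval (X 0 : R3) q) = inl q := by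
    rw [← Polynomial.aeval_algHom_apply, show phi (X 0) = inl Polynomial.X from by
      simp [phi, vphi], aeval_inlX]
  simp only [NF, map_add, map_mul, h1, h1q]
  have h2 : phi (X 1) = -(inl Polynomial.X) * DualNumber.eps := by simp [phi, vphi]
  have h3 : phi (X 2) = DualNumber.eps := by simp [phi, vphi]
  have h4 : phi (C c : R3) = inl (Polynomial.C c) := by
    rw [show (C c : R3) = algebraMap ℚ R3 c from rfl, AlgHom.commutes, algMap_eq]
  rw [h2, h3, h4, inl_sub, inl_mul]
  ring

lemma NF_eq_zero {p q : Polynomial ℚ} {c : ℚ} (h : phi (NF p q c) = 0) : NF p q c = 0 := by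
  rw [phi_NF] at h
  have hfst := congrArg TrivSqZeroExt.fst h
  have hsnd := congrArg TrivSqZeroExt.snd h
  simp only [fst_add, fst_inl, snd_add, snd_inl, fst_zero, snd_zero] at hfst hsnd
  rw [show (inl (Polynomial.C c - Polynomial.X * q) * DualNumber.eps : D)
    = inl (Polynomial.C c - Polynomial.X * q) * DualNumber.eps ^ 1 from by rw [pow_one]] at hfst hsnd
  rw [fst_inl_mul_eps_pow] at hfst
  rw [snd_inl_mul_eps_pow] at hsnd
  simp only [if_pos rfl, if_neg one_ne_zero] at hfst hsnd
  have hp : p = 0 := by simpa using hfst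
  have h0 : Polynomial.C c = Polynomial.X * q := by
    have := sub_eq_zero.mp (by simpa using hsnd)
    exact this
  have hc : c = 0 := by
    have := congrArg (fun r => Polynomial.coeff r 0) h0
    simpa [Polynomial.coeff_X_mul] using this
  have hq : q = 0 := by
    rw [hc, map_zero] at h0
    rcases mul_eq_zero.mp h0.symm with h | h
    · exact absurd h Polynomial.X_ne_zero
    · exact h
  rw [hp, hq, hc]
  simp [NF]

lemma mem_I3_iff (f : R3) : f ∈ I3 ↔ phi f = 0 := by
  refine ⟨phi_I3 f, fun hphi => ?_⟩
  obtain ⟨p, q, c, hn⟩ := exists_nf f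
  have h2 : phi (NF p q c) = 0 := by
    have := phi_I3 _ hn
    rw [map_sub, hphi, zero_sub, neg_eq_zero] at this
    exact this
  have := NF_eq_zero h2
  rw [this, sub_zero] at hn
  exact hn

@[simp] lemma my2_0 : my2 0 = 0 := by simp [my2, Finsupp.single_apply]
@[simp] lemma my2_1 : my2 1 = 2 := by simp [my2, Finsupp.single_apply]
@[simp] lemma my2_2 : my2 2 = 0 := by simp [my2, Finsupp.single_apply]
@[simp] lemma mxz_0 : mxz 0 = 1 := by simp [mxz, Finsupp.single_apply]
@[simp] lemma mxz_1 : mxz 1 = 0 := by simp [mxz, Finsupp.single_apply]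
@[simp] lemma mxz_2 : mxz 2 = 1 := by simp [mxz, Finsupp.single_apply]
@[simp] lemma my1_0 : my1 0 = 0 := by simp [my1, Finsupp.single_apply]
@[simp] lemma my1_1 : my1 1 = 1 := by simp [my1, Finsupp.single_apply]
@[simp] lemma my1_2 : my1 2 = 0 := by simp [my1, Finsupp.single_apply]
@[simp] lemma myz_0 : myz 0 = 0 := by simp [myz, Finsupp.single_apply]
@[simp] lemma myz_1 : myz 1 = 1 := by simp [myz, Finsupp.single_apply]
@[simp] lemma myz_2 : myz 2 = 1 := by simp [myz, Finsupp.single_apply]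
@[simp] lemma mz2_0 : mz2 0 = 0 := by simp [mz2, Finsupp.single_apply]
@[simp] lemma mz2_1 : mz2 1 = 0 := by simp [mz2, Finsupp.single_apply]
@[simp] lemma mz2_2 : mz2 2 = 2 := by simp [mz2, Finsupp.single_apply]

lemma sup_gy2 : (X 1 ^ 2 : R3).support = {my2} := by
  rw [hgy2, support_monomial]; norm_num
lemma sup_gyz : (X 1 * X 2 : R3).support = {myz} := by
  rw [hgyz, support_monomial]; norm_num
lemma sup_gz2 : (X 2 ^ 2 : R3).support = {mz2} := by
  rw [hgz2, support_monomial]; norm_num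

lemma lead_singleton {f : R3} {a : Fin 3 →₀ ℕ} (h : f.support = {a}) :
    ∀ m, IsLeadMon f m ↔ m = a := by
  intro m
  constructor
  · rintro ⟨hm, -⟩
    rw [h, Finset.mem_singleton] at hm
    exact hm
  · rintro rfl
    exact ⟨by rw [h]; exact Finset.mem_singleton_self _,
      fun m' hm' => by rw [h, Finset.mem_singleton] at hm'; exact hm' ▸ Or.inl rfl⟩

lemma lead_y2 : ∀ m, IsLeadMon (X 1 ^ 2 : R3) m ↔ m = my2 := lead_singleton sup_gy2
lemma lead_yz : ∀ m, IsLeadMon (X 1 * X 2 : R3) m ↔ m = myz := lead_singleton sup_gyz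
lemma lead_z2 : ∀ m, IsLeadMon (X 2 ^ 2 : R3) m ↔ m = mz2 := lead_singleton sup_gz2

lemma lexLe_my1_mxz : lexLe my1 mxz := by
  rw [lexLe_iff]; norm_num

lemma not_lexLe_mxz_my1 : ¬ lexLe mxz my1 := by
  rw [lexLe_iff]
  push_neg
  refine ⟨fun h => absurd (DFunLike.congr_fun h 0) (by norm_num), by norm_num, by norm_num, by norm_num⟩

lemma lead_xz : ∀ m, IsLeadMon (X 0 * X 2 + X 1 : R3) m ↔ m = mxz := by
  intro m
  constructor
  · rintro ⟨hm, hall⟩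
    rw [sup_gxz] at hm
    rcases Finset.mem_insert.mp hm with rfl | hm
    · rfl
    · rw [Finset.mem_singleton] at hm
      subst hm
      exact absurd (hall mxz (by rw [sup_gxz]; simp)) not_lexLe_mxz_my1
  · rintro rfl
    refine ⟨by rw [sup_gxz]; simp, fun m' hm' => ?_⟩
    rw [sup_gxz] at hm'
    rcases Finset.mem_insert.mp hm' with rfl | hm'
    · exact Or.inl rfl
    · rw [Finset.mem_singleton] at hm'
      subst hm'
      exact lexLe_my1_mxz

lemma lead_cases {f : R3} {mf : Fin 3 →₀ ℕ} (hf : f ∈ I3) (hlead : IsLeadMon f mf) :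
    2 ≤ mf 2 ∨ (1 ≤ mf 2 ∧ 1 ≤ mf 1) ∨ (1 ≤ mf 2 ∧ 1 ≤ mf 0) ∨ 2 ≤ mf 1 := by
  by_contra hcon
  push_neg at hcon
  obtain ⟨h2lt, h21, h20, h1lt⟩ := hcon
  have hc : f.coeff mf ≠ 0 := mem_support_iff.mp hlead.1
  have hphi := phi_I3 f hf
  have hm2 : mf 2 = 0 ∨ mf 2 = 1 := by omega
  rcases hm2 with h2 | h2
  · have hm1 : mf 1 = 0 ∨ mf 1 = 1 := by omega
    rcases hm1 with h1 | h1
    · have hz : ∀ m ∈ f.support, m ≠ mf →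
          (if m 1 = 0 ∧ m 2 = 0 ∧ m 0 = mf 0 then f.coeff m else 0) = 0 := by
        intro m hm hne
        rw [if_neg]
        rintro ⟨k1, k2, k0⟩
        have hle := hlead.2 m hm
        rw [lexLe_iff] at hle
        rcases hle with rfl | hlt | ⟨e2, hlt⟩ | ⟨e2, e1, hlt⟩
        · exact hne rfl
        all_goals omega
      have hA : (phi f).fst.coeff (mf 0) = f.coeff mf := by
        rw [fst_phi_coeff, Finset.sum_eq_single_of_mem mf hlead.1 hz, if_pos ⟨h1, h2, rfl⟩]
      rw [hphi] at hA
      simp only [fst_zero, Polynomial.coeff_zero] at hA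
      exact hc hA.symm
    · have hz : ∀ m ∈ f.support, m ≠ mf →
          (if m 1 + m 2 = 1 ∧ m 0 + m 1 = mf 0 + 1 then (-1 : ℚ) ^ (m 1) * f.coeff m else 0) = 0 := by
        intro m hm hne
        rw [if_neg]
        rintro ⟨k1, k0⟩
        have hle := hlead.2 m hm
        rw [lexLe_iff] at hle
        rcases hle with rfl | hlt | ⟨e2, hlt⟩ | ⟨e2, e1, hlt⟩
        · exact hne rfl
        all_goals omega
      have hB : (phi f).snd.coeff (mf 0 + 1) = -(f.coeff mf) := by
        rw [snd_phi_coeff, Finset.sum_eq_single_of_mem mf hlead.1 hz,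
          if_pos ⟨by omega, by omega⟩, h1]
        ring
      rw [hphi] at hB
      simp only [snd_zero, Polynomial.coeff_zero] at hB
      exact hc (neg_eq_zero.mp hB.symm)
  · have h1 : mf 1 = 0 := by omega
    have h0 : mf 0 = 0 := by omega
    have hz : ∀ m ∈ f.support, m ≠ mf →
        (if m 1 + m 2 = 1 ∧ m 0 + m 1 = 0 then (-1 : ℚ) ^ (m 1) * f.coeff m else 0) = 0 := by
      intro m hm hne
      rw [if_neg]
      rintro ⟨k1, k0⟩
      exact hne (finsupp_ext3 (by omega) (by omega) (by omega))
    have hC : (phi f).snd.coeff 0 = f.coeff mf := by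
      rw [snd_phi_coeff, show (0:ℕ) = mf 0 + mf 1 from by omega,
        Finset.sum_eq_single_of_mem mf hlead.1 ?_, if_pos ⟨by omega, rfl⟩, h1]
      · ring
      · rw [show mf 0 + mf 1 = 0 from by omega]
        exact hz
    rw [hphi] at hC
    simp only [snd_zero, Polynomial.coeff_zero] at hC
    exact hc hC.symm

lemma gb3 : ∀ f ∈ I3, f ≠ 0 → ∃ g ∈ Igen, ∃ mf mg, IsLeadMon f mf ∧ IsLeadMon g mg ∧
    ∀ j, mg j ≤ mf j := by
  intro f hf hne
  obtain ⟨mf, hlead⟩ := exists_lead hne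
  rcases lead_cases hf hlead with h | h | h | h
  · refine ⟨X 2 ^ 2, by simp [Igen], mf, mz2, hlead, (lead_z2 _).mpr rfl, fun j => ?_⟩
    fin_cases j <;> simp <;> omega
  · refine ⟨X 1 * X 2, by simp [Igen], mf, myz, hlead, (lead_yz _).mpr rfl, fun j => ?_⟩
    fin_cases j <;> simp <;> omega
  · refine ⟨X 0 * X 2 + X 1, by simp [Igen], mf, mxz, hlead, (lead_xz _).mpr rfl, fun j => ?_⟩
    fin_cases j <;> simp <;> omega
  · refine ⟨X 1 ^ 2, by simp [Igen], mf, my2, hlead, (lead_y2 _).mpr rfl, fun j => ?_⟩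
    fin_cases j <;> simp <;> omega


lemma gy2_ne : (X 1 ^ 2 : R3) ≠ 0 := fun h => by
  have := sup_gy2; rw [h] at this; simp at this
lemma gxz_ne : (X 0 * X 2 + X 1 : R3) ≠ 0 := fun h => by
  have := sup_gxz; rw [h] at this; simp at this
  exact (Finset.insert_ne_empty _ _) this.symm
lemma gyz_ne : (X 1 * X 2 : R3) ≠ 0 := fun h => by
  have := sup_gyz; rw [h] at this; simp at this
lemma gz2_ne : (X 2 ^ 2 : R3) ≠ 0 := fun h => by
  have := sup_gz2; rw [h] at this; simp at this

lemma mem_vars_y2 : ∀ i, i ∈ (X 1 ^ 2 : R3).vars ↔ i = 1 := by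
  intro i
  rw [mem_vars]
  constructor
  · rintro ⟨d, hd, hi⟩
    rw [sup_gy2, Finset.mem_singleton] at hd
    subst hd
    rw [my2, Finsupp.mem_support_iff, Finsupp.single_apply] at hi
    by_contra hne
    simp [Ne.symm hne] at hi
  · rintro rfl
    exact ⟨my2, by rw [sup_gy2]; simp, by rw [Finsupp.mem_support_iff]; simp⟩

lemma two_mem_vars_xz : (2 : Fin 3) ∈ (X 0 * X 2 + X 1 : R3).vars :=
  (mem_vars 2).mpr ⟨mxz, by rw [sup_gxz]; simp, by rw [Finsupp.mem_support_iff]; simp⟩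
lemma two_mem_vars_yz : (2 : Fin 3) ∈ (X 1 * X 2 : R3).vars :=
  (mem_vars 2).mpr ⟨myz, by rw [sup_gyz]; simp, by rw [Finsupp.mem_support_iff]; simp⟩
lemma two_mem_vars_z2 : (2 : Fin 3) ∈ (X 2 ^ 2 : R3).vars :=
  (mem_vars 2).mpr ⟨mz2, by rw [sup_gz2]; simp, by rw [Finsupp.mem_support_iff]; simp⟩

lemma upd_my2 : my2.update 1 0 = 0 := by
  ext j; fin_cases j <;> simp [my2, Finsupp.single_apply]
lemma upd_mxz : mxz.update 2 0 = Finsupp.single 0 1 := by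
  ext j; fin_cases j <;> simp [mxz, Finsupp.single_apply]

lemma deg1_gy2 : degreeOf 1 (X 1 ^ 2 : R3) = 2 := by
  rw [degreeOf_eq_sup, sup_gy2]
  simp

lemma init_y2 : initialWrt 1 (X 1 ^ 2 : R3) = 1 := by
  rw [initialWrt, deg1_gy2, coeffWrt, sup_gy2]
  rw [Finset.filter_singleton, if_pos my2_1, Finset.sum_singleton, upd_my2]
  rw [hgy2, coeff_monomial, if_pos rfl, monomial_zero', C_1]

lemma deg2_gxz : degreeOf 2 (X 0 * X 2 + X 1 : R3) = 1 := by
  rw [degreeOf_eq_sup, sup_gxz]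
  simp

lemma init_xz : initialWrt 2 (X 0 * X 2 + X 1 : R3) = X 0 := by
  rw [initialWrt, deg2_gxz, coeffWrt, sup_gxz]
  rw [Finset.filter_insert, if_pos mxz_2, Finset.filter_singleton,
    if_neg (by rw [my1_2]; exact zero_ne_one), Finset.sum_insert (by simp),
    Finset.sum_empty, add_zero, upd_mxz, coeff_gxz, if_pos rfl, if_neg mxz_ne_my1,
    add_zero, Xm]

def J3 : Ideal R3 := Ideal.span {X 1 ^ 2, X 0 * X 2 + X 1}

lemma yz_in_satJ3 : (X 1 * X 2 : R3) ∈ satBy J3 (X 0) := by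
  refine ⟨1, ?_⟩
  rw [pow_one, show (X 0 * (X 1 * X 2) : R3) = X 1 * (X 0 * X 2 + X 1) - X 1 ^ 2 from by ring]
  exact Ideal.sub_mem _ (Ideal.mul_mem_left _ _ (Ideal.subset_span (by simp)))
    (Ideal.subset_span (by simp))

lemma z2_in_satJ3 : (X 2 ^ 2 : R3) ∈ satBy J3 (X 0) := by
  refine ⟨2, ?_⟩
  rw [show (X 0 ^ 2 * X 2 ^ 2 : R3)
    = (X 0 * X 2 - X 1) * (X 0 * X 2 + X 1) + X 1 ^ 2 from by ring]
  exact Ideal.add_mem _ (Ideal.mul_mem_left _ _ (Ideal.subset_span (by simp)))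
    (Ideal.subset_span (by simp))

lemma I3_eq_sat : I3 = satBy J3 (X 0) := by
  apply le_antisymm
  · rw [I3, Igen, Ideal.span_le]
    rintro g (rfl | rfl | rfl | rfl)
    · exact ⟨0, by rw [pow_zero, one_mul]; exact Ideal.subset_span (by simp)⟩
    · exact ⟨0, by rw [pow_zero, one_mul]; exact Ideal.subset_span (by simp)⟩
    · exact yz_in_satJ3
    · exact z2_in_satJ3
  · rintro f ⟨k, hk⟩
    have hsub : J3 ≤ I3 := by
      rw [J3, Ideal.span_le]
      rintro g (rfl | rfl)
      · exact gy2_mem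
      · exact gxz_mem
    have h0 : phi (X 0 ^ k * f) = 0 := phi_I3 _ (hsub hk)
    rw [map_mul, map_pow, phiX0, inl_pow] at h0
    have hfst := congrArg TrivSqZeroExt.fst h0
    have hsnd := congrArg TrivSqZeroExt.snd h0
    rw [fst_mul, fst_inl, fst_zero] at hfst
    rw [snd_mul, snd_inl, fst_inl, snd_zero] at hsnd
    have hXk : (Polynomial.X : Polynomial ℚ) ^ k ≠ 0 := pow_ne_zero _ Polynomial.X_ne_zero
    have h1 : (phi f).fst = 0 := by
      rcases mul_eq_zero.mp hfst with h | h
      · exact absurd h hXk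
      · exact h
    have h2 : (phi f).snd = 0 := by
      rw [smul_zero, add_zero, smul_eq_mul] at hsnd
      rcases mul_eq_zero.mp hsnd with h | h
      · exact absurd h hXk
      · exact h
    rw [mem_I3_iff]
    exact TrivSqZeroExt.ext h1 h2

def psi : R3 →ₐ[ℚ] DualNumber ℚ :=
  aeval ![DualNumber.eps, -DualNumber.eps, 1]

lemma psi_J3 : ∀ f ∈ J3, psi f = 0 := by
  intro f hf
  have hgen : ∀ g ∈ ({X 1 ^ 2, X 0 * X 2 + X 1} : Set R3), psi g = 0 := by
    have hee : (DualNumber.eps : DualNumber ℚ) * DualNumber.eps = 0 := DualNumber.eps_mul_eps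
    rintro g (rfl | rfl)
    · rw [map_pow, show psi (X 1) = -DualNumber.eps from by simp [psi]]
      linear_combination hee
    · rw [map_add, map_mul, show psi (X 0) = DualNumber.eps from by simp [psi],
        show psi (X 1) = -DualNumber.eps from by simp [psi],
        show psi (X 2) = 1 from by simp [psi]]
      ring
  refine Submodule.span_induction (p := fun x _ => psi x = 0) hgen (map_zero psi)
    (fun a b _ _ ha hb => by show psi (a + b) = 0; rw [map_add, ha, hb, add_zero])
    (fun a b _ hb => by show psi (a • b) = 0; rw [smul_eq_mul, map_mul, hb, mul_zero]) hf

lemma yz_not_J3 : (X 1 * X 2 : R3) ∉ J3 := by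
  intro h
  have := psi_J3 _ h
  rw [map_mul, show psi (X 1) = -DualNumber.eps from by simp [psi],
    show psi (X 2) = 1 from by simp [psi], mul_one] at this
  have hsnd := congrArg TrivSqZeroExt.snd this
  rw [TrivSqZeroExt.snd_neg, DualNumber.eps, TrivSqZeroExt.snd_inr, TrivSqZeroExt.snd_zero] at hsnd
  exact one_ne_zero (neg_eq_zero.mp hsnd)


end
end Stmt19Aux

open Stmt19Aux TrivSqZeroExt

/-- In `ℚ[x, y, z]` (variables `0 < 1 < 2`) with lex
ordering, `G = {y², xz + y, yz, z²}` is a reduced lex Gröbner basis, its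
W-characteristic set is `C = [y², xz + y]`, `⟨G⟩ = sat(C) = ⟨C⟩ : x^∞`, but
`⟨C⟩ ≠ sat(C)`. -/
theorem stmt_19 (G : Set (MvPolynomial (Fin 3) ℚ)) (C : TriSet ℚ (Fin 3))
    (hGdef : G = {X 1 ^ 2, X 0 * X 2 + X 1, X 1 * X 2, X 2 ^ 2})
    (hCdef : C.elems = [(1, X 1 ^ 2), (2, X 0 * X 2 + X 1)]) :
    IsReducedGB G (Ideal.span G) ∧ IsWCharOf C G ∧
    Ideal.span G = C.sat ∧ C.sat = satBy C.ideal (X 0) ∧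
    C.ideal ≠ C.sat := by
  subst hGdef
  have hCid : C.ideal = J3 := by
    rw [TriSet.ideal, J3]
    congr 1
    ext p
    simp only [hCdef, Set.mem_setOf_eq, List.mem_cons, List.not_mem_nil, or_false,
      Set.mem_insert_iff, Set.mem_singleton_iff]
    constructor
    · rintro ⟨e, (rfl | rfl), rfl⟩
      · exact Or.inl rfl
      · exact Or.inr rfl
    · rintro (rfl | rfl)
      · exact ⟨(1, X 1 ^ 2), Or.inl rfl, rfl⟩
      · exact ⟨(2, X 0 * X 2 + X 1), Or.inr rfl, rfl⟩
  have hprod : C.prodInit = X 0 := by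
    rw [TriSet.prodInit, hCdef]
    simp only [List.map_cons, List.map_nil, List.prod_cons, List.prod_nil]
    show initialWrt 1 (X 1 ^ 2) * (initialWrt 2 (X 0 * X 2 + X 1) * 1) = X 0
    rw [init_y2, init_xz, one_mul, mul_one]
  have hsat : C.sat = satBy J3 (X 0) := by
    rw [TriSet.sat, hprod, hCid]
  refine ⟨⟨⟨?_, ?_, ?_⟩, ?_, ?_, ?_⟩, ⟨?_, ?_⟩, ?_, ?_, ?_⟩
  · exact (((Set.finite_singleton _).insert _).insert _).insert _
  · exact Ideal.subset_span
  · exact fun f hf hne => gb3 f hf hne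
  · intro h
    rcases h with h | h | h | h
    · exact gy2_ne h.symm
    · exact gxz_ne h.symm
    · exact gyz_ne h.symm
    · exact gz2_ne h.symm
  · rintro g (rfl | rfl | rfl | rfl) m hm
    · rw [(lead_y2 m).mp hm, hgy2, coeff_monomial, if_pos rfl]
    · rw [(lead_xz m).mp hm, coeff_gxz, if_pos rfl, if_neg mxz_ne_my1, add_zero]
    · rw [(lead_yz m).mp hm, hgyz, coeff_monomial, if_pos rfl]
    · rw [(lead_z2 m).mp hm, hgz2, coeff_monomial, if_pos rfl]
  · rintro g (rfl | rfl | rfl | rfl) g' (rfl | rfl | rfl | rfl) hne m hm m' hm' <;>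
      first
        | exact absurd rfl hne
        | (simp only [lead_y2, lead_xz, lead_yz, lead_z2] at hm'
           subst hm'
           simp only [sup_gy2, sup_gxz, sup_gyz, sup_gz2, Finset.mem_singleton,
             Finset.mem_insert] at hm
           first
             | (rcases hm with rfl | rfl) <;>
                 (intro hall
                  have h0 := hall 0; have h1 := hall 1; have h2 := hall 2
                  simp at h0 h1 h2)
             | (subst hm
                intro hall
                have h0 := hall 0; have h1 := hall 1; have h2 := hall 2
                simp at h0 h1 h2))
  · intro e he
    rw [hCdef] at he
    simp only [List.mem_cons, List.not_mem_nil, or_false] at he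
    rcases he with rfl | rfl
    · refine ⟨Or.inl rfl, ?_⟩
      rintro g (rfl | rfl | rfl | rfl) hLV mg me hmg hme
      · rw [(lead_y2 mg).mp hmg, (lead_y2 me).mp hme]
        exact Or.inl rfl
      · exact absurd (hLV.2 2 two_mem_vars_xz) (by decide)
      · exact absurd (hLV.2 2 two_mem_vars_yz) (by decide)
      · exact absurd (hLV.2 2 two_mem_vars_z2) (by decide)
    · refine ⟨Or.inr (Or.inl rfl), ?_⟩
      rintro g (rfl | rfl | rfl | rfl) hLV mg me hmg hme
      · exact absurd ((mem_vars_y2 2).mp hLV.1) (by decide)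
      · rw [(lead_xz mg).mp hmg, (lead_xz me).mp hme]
        exact Or.inl rfl
      · rw [(lead_yz mg).mp hmg, (lead_xz me).mp hme, lexLe_iff]
        exact Or.inr (Or.inr (Or.inl ⟨by simp, by simp⟩))
      · rw [(lead_z2 mg).mp hmg, (lead_xz me).mp hme, lexLe_iff]
        exact Or.inr (Or.inl (by simp))
  · rintro g (rfl | rfl | rfl | rfl) i hLV
    · have hi : i = 1 := (mem_vars_y2 i).mp hLV.1
      subst hi
      rw [TriSet.lvs, hCdef]
      simp
    · have h2 : (2 : Fin 3) ≤ i := hLV.2 2 two_mem_vars_xz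
      have hlt := i.isLt
      have hi : i = 2 := Fin.ext (by omega)
      subst hi
      rw [TriSet.lvs, hCdef]
      simp
    · have h2 : (2 : Fin 3) ≤ i := hLV.2 2 two_mem_vars_yz
      have hlt := i.isLt
      have hi : i = 2 := Fin.ext (by omega)
      subst hi
      rw [TriSet.lvs, hCdef]
      simp
    · have h2 : (2 : Fin 3) ≤ i := hLV.2 2 two_mem_vars_z2
      have hlt := i.isLt
      have hi : i = 2 := Fin.ext (by omega)
      subst hi
      rw [TriSet.lvs, hCdef]
      simp
  · rw [hsat]
    exact I3_eq_sat
  · rw [hsat, hCid]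
  · rw [hsat, hCid]
    intro h
    exact yz_not_J3 (h.symm ▸ yz_in_satJ3)
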